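/- Let g ≥ 2 be an integer and δ > 0 a real number. Define F : (0,∞) → ℂ by F(ε) = ∫_{−∞}^{∞} e^{−ε(t−iδ)²} · (t−iδ)^{−(2g−2)} dt. Then F is (g−1)-times differentiable on (0,∞) and its (g−1)-st derivative satisfies F^{(g−1)}(ε) = (−1)^{g−1} · √(π/ε) for every ε > 0. -/

import Mathlib

open MeasureTheory Real

open Complex in
private noncomputable def zc (δ t : ℝ) : ℂ := (t:ℂ) - Complex.I * δ

private lemma zc_ne (δ : ℝ) (hδ : 0 < δ) (t : ℝ) : zc δ t ≠ 0 := by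
  intro h
  have := congrArg Complex.im h
  simp [zc] at this
  exact hδ.ne' this

private lemma zc_abs (δ : ℝ) (hδ : 0 < δ) (t : ℝ) : δ ≤ ‖zc δ t‖ := by
  have h := Complex.abs_im_le_norm (zc δ t)
  simpa [zc, abs_of_pos hδ] using h

private lemma zc_re (δ t x : ℝ) : (-(x:ℂ) * (zc δ t)^2).re = -x*(t^2-δ^2) := by
  simp [zc, Complex.mul_re, pow_two]

private lemma cont_aux (δ : ℝ) (hδ : 0 < δ) (x : ℝ) (m : ℕ) :
    Continuous fun t : ℝ => Complex.exp (-(x:ℂ) * (zc δ t)^2) * ((zc δ t)^m)⁻¹ := by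
  have hz : Continuous fun t : ℝ => zc δ t := by
    unfold zc; fun_prop
  exact (Complex.continuous_exp.comp (by fun_prop)).mul
    ((hz.pow m).inv₀ fun t => pow_ne_zero _ (zc_ne δ hδ t))

private lemma norm_aux (δ : ℝ) (hδ : 0 < δ) (x : ℝ) (m : ℕ) (t : ℝ) :
    ‖Complex.exp (-(x:ℂ) * (zc δ t)^2) * ((zc δ t)^m)⁻¹‖
      ≤ Real.exp (x*δ^2) * (δ^m)⁻¹ * Real.exp (-x*t^2) := by
  rw [norm_mul, Complex.norm_exp, zc_re]
  have h1 : ‖((zc δ t)^m)⁻¹‖ ≤ (δ^m)⁻¹ := by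
    rw [norm_inv, norm_pow]
    exact inv_anti₀ (pow_pos hδ m) (pow_le_pow_left₀ hδ.le (zc_abs δ hδ t) m)
  calc Real.exp (-x*(t^2-δ^2)) * ‖((zc δ t)^m)⁻¹‖
      ≤ Real.exp (-x*(t^2-δ^2)) * (δ^m)⁻¹ := by
        exact mul_le_mul_of_nonneg_left h1 (Real.exp_pos _).le
    _ = Real.exp (x*δ^2) * (δ^m)⁻¹ * Real.exp (-x*t^2) := by
        rw [show -x*(t^2-δ^2) = x*δ^2 + -x*t^2 by ring, Real.exp_add]; ring

private lemma integrable_aux (δ : ℝ) (hδ : 0 < δ) {x : ℝ} (hx : 0 < x) (m : ℕ) :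
    Integrable fun t : ℝ => Complex.exp (-(x:ℂ) * (zc δ t)^2) * ((zc δ t)^m)⁻¹ := by
  refine Integrable.mono' (((integrable_exp_neg_mul_sq hx).const_mul
      (Real.exp (x*δ^2) * (δ^m)⁻¹)).congr ?_) ((cont_aux δ hδ x m).aestronglyMeasurable)
      (Filter.Eventually.of_forall fun t => norm_aux δ hδ x m t)
  filter_upwards with t
  rw [mul_assoc]

set_option maxHeartbeats 1000000 in
private lemma hasDerivAt_aux (δ : ℝ) (hδ : 0 < δ) {m : ℕ} (hm : 2 ≤ m)
    {ε₀ : ℝ} (hε₀ : 0 < ε₀) :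
    HasDerivAt (fun x : ℝ => ∫ t : ℝ, Complex.exp (-(x:ℂ) * (zc δ t)^2) * ((zc δ t)^m)⁻¹)
      (∫ t : ℝ, -(Complex.exp (-(ε₀:ℂ) * (zc δ t)^2) * ((zc δ t)^(m-2))⁻¹)) ε₀ := by
  have key : ∀ (x : ℝ) (t : ℝ),
      HasDerivAt (fun x : ℝ => Complex.exp (-(x:ℂ) * (zc δ t)^2) * ((zc δ t)^m)⁻¹)
        (-(Complex.exp (-(x:ℂ) * (zc δ t)^2) * ((zc δ t)^(m-2))⁻¹)) x := by
    intro x t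
    have h1 : HasDerivAt (fun x : ℝ => -(x:ℂ) * (zc δ t)^2) (-(zc δ t)^2) x := by
      simpa using ((Complex.ofRealCLM.hasDerivAt (x := x)).neg.mul_const ((zc δ t)^2))
    have h2 := (h1.cexp).mul_const ((zc δ t)^m)⁻¹
    convert h2 using 1
    case e'_4 => rfl
    have hz := zc_ne δ hδ t
    have hpow : (zc δ t)^m = (zc δ t)^(m-2) * (zc δ t)^2 := by
      rw [← pow_add]; congr 1; omega
    field_simp [hpow]
    rw [hpow]; ring
  have hb : ∀ (x : ℝ), x ∈ Metric.ball ε₀ (ε₀/2) → ∀ t : ℝ,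
      ‖-(Complex.exp (-(x:ℂ) * (zc δ t)^2) * ((zc δ t)^(m-2))⁻¹)‖
        ≤ Real.exp (2*ε₀*δ^2) * (δ^(m-2))⁻¹ * Real.exp (-(ε₀/2)*t^2) := by
    intro x hx t
    rw [Real.ball_eq_Ioo] at hx
    rw [norm_neg]
    refine (norm_aux δ hδ x (m-2) t).trans ?_
    have h1 : Real.exp (x*δ^2) ≤ Real.exp (2*ε₀*δ^2) := by
      apply Real.exp_le_exp.2
      nlinarith [hx.1, hx.2, sq_nonneg δ]
    have h2 : Real.exp (-x*t^2) ≤ Real.exp (-(ε₀/2)*t^2) := by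
      apply Real.exp_le_exp.2
      nlinarith [hx.1, hx.2, sq_nonneg t]
    clear h1 h2
    gcongr
    · nlinarith [hx.1, hx.2, sq_nonneg δ]
    · nlinarith [hx.1, hx.2, sq_nonneg t]
  have main := hasDerivAt_integral_of_dominated_loc_of_deriv_le
    (μ := volume) (x₀ := ε₀) (s := Metric.ball ε₀ (ε₀/2))
    (F := fun (x : ℝ) (t : ℝ) => Complex.exp (-(x:ℂ) * (zc δ t)^2) * ((zc δ t)^m)⁻¹)
    (F' := fun (x : ℝ) (t : ℝ) => -(Complex.exp (-(x:ℂ) * (zc δ t)^2) * ((zc δ t)^(m-2))⁻¹))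
    (bound := fun t => Real.exp (2*ε₀*δ^2) * (δ^(m-2))⁻¹ * Real.exp (-(ε₀/2)*t^2))
    (Metric.ball_mem_nhds ε₀ (half_pos hε₀))
    (Filter.Eventually.of_forall fun x => (cont_aux δ hδ x m).aestronglyMeasurable)
    (integrable_aux δ hδ hε₀ m)
    (((cont_aux δ hδ ε₀ (m-2)).neg).aestronglyMeasurable)
    (Filter.Eventually.of_forall fun t x hx => hb x hx t)
    ((integrable_exp_neg_mul_sq (half_pos hε₀)).const_mul (Real.exp (2*ε₀*δ^2) * (δ^(m-2))⁻¹))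
    (Filter.Eventually.of_forall fun t x _ => key x t)
  exact main.2

private lemma gaussian_shift (δ : ℝ) {ε : ℝ} (hε : 0 < ε) :
    (∫ t : ℝ, Complex.exp (-(ε:ℂ) * (zc δ t)^2)) = ((Real.sqrt (π/ε) : ℝ) : ℂ) := by
  have hz : ∀ t : ℝ, zc δ t = (t:ℂ) + ((-δ : ℝ) : ℂ) * Complex.I := by
    intro t; simp [zc]; ring
  simp_rw [hz]
  rw [GaussianFourier.integral_cexp_neg_mul_sq_add_real_mul_I (by simpa using hε) (-δ)]
  rw [show ((π:ℂ)/(ε:ℂ)) = ((π/ε : ℝ) : ℂ) by push_cast; ring]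
  rw [show (1/2 : ℂ) = (((1/2 : ℝ) : ℂ)) by norm_num]
  rw [← Complex.ofReal_cpow (by positivity) (1/2 : ℝ)]
  rw [← Real.sqrt_eq_rpow]

/-- For F(ε) = ∫_ℝ e^{−ε(t−iδ)²}(t−iδ)^{−(2g−2)} dt (δ > 0 fixed), F is
(g−1)-times differentiable on (0,∞) (witnessed by a chain D of successive derivatives)
and F^{(g−1)}(ε) = (−1)^{g−1} √(π/ε) for every ε > 0. -/
theorem stmt14 (g : ℕ) (hg : 2 ≤ g) (δ : ℝ) (hδ : 0 < δ) :
    ∃ D : ℕ → ℝ → ℂ,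
      (D 0 = fun ε : ℝ =>
        ∫ t : ℝ, Complex.exp (-(ε : ℂ) * ((t : ℂ) - Complex.I * (δ : ℂ)) ^ 2) *
          (((t : ℂ) - Complex.I * (δ : ℂ)) ^ (2 * g - 2))⁻¹) ∧
      (∀ k < g - 1, ∀ ε : ℝ, 0 < ε → HasDerivAt (D k) (D (k + 1) ε) ε) ∧
      (∀ ε : ℝ, 0 < ε →
        D (g - 1) ε = (-1 : ℂ) ^ (g - 1) * (Real.sqrt (π / ε) : ℂ)) := by
  refine ⟨fun k ε => (-1:ℂ)^k * ∫ t : ℝ,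
      Complex.exp (-(ε:ℂ) * (zc δ t)^2) * ((zc δ t)^(2*g-2-2*k))⁻¹, ?_, ?_, ?_⟩
  · funext ε
    simp [zc]
  · intro k hk ε hε
    have hm : 2 ≤ 2*g-2-2*k := by omega
    have h := (hasDerivAt_aux δ hδ hm hε).const_mul ((-1:ℂ)^k)
    convert h using 1
    case e'_4 => rfl
    beta_reduce
    rw [integral_neg]
    rw [show 2*g-2-2*(k+1) = 2*g-2-2*k-2 by omega]
    rw [pow_succ]
    ring
  · intro ε hε
    beta_reduce
    rw [show 2*g-2-2*(g-1) = 0 by omega]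
    simp only [pow_zero, inv_one, mul_one]
    rw [gaussian_shift δ hε]
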